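/- arXiv:0709.2345 — 5 statements merged into one kernel-verified Lean document; each statement's English description precedes it below -/
import Mathlib

section
/- For complex numbers α, β, γ, δ with all of Re(1+α+γ), Re(1+α+δ), Re(1+β+γ), Re(1+β+δ) > 1, the Dirichlet series Σ_{n≥1} σ_{α,β}(n) σ_{γ,δ}(n) n^{-(1+s)} converges and equals ζ(1+s+α+γ)ζ(1+s+α+δ)ζ(1+s+β+γ)ζ(1+s+β+δ)/ζ(2+2s+α+β+γ+δ), for Re(s) sufficiently large. -/
open Finset

/-- σ_{α,β}(n) = Σ_{n₁n₂ = n} n₁^{-α} n₂^{-β}. -/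
noncomputable def sigmaShift (α β : ℂ) (n : ℕ) : ℂ :=
  ∑ x ∈ n.divisorsAntidiagonal, (x.1 : ℂ) ^ (-α) * (x.2 : ℂ) ^ (-β)

private lemma natpos_cpow_eq {n : ℕ} (hn : 0 < n) (z : ℂ) :
    (n : ℂ) ^ z = Complex.exp ((Real.log n : ℂ) * z) := by
  have h0 : (n : ℂ) ≠ 0 := Nat.cast_ne_zero.mpr hn.ne'
  rw [Complex.cpow_def_of_ne_zero h0, Complex.ofReal_log (Nat.cast_nonneg n),
    Complex.ofReal_natCast]

private lemma hasSum_zeta_pnat {w : ℂ} (hw : 1 < w.re) :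
    HasSum (fun n : ℕ+ => ((n : ℕ) : ℂ) ^ (-w)) (riemannZeta w) := by
  have hw0 : w ≠ 0 := fun h => by simp [h] at hw; linarith
  have hsum : Summable (fun n : ℕ => 1 / (n : ℂ) ^ w) :=
    Complex.summable_one_div_nat_cpow.mpr hw
  have h : HasSum (fun n : ℕ => (n : ℂ) ^ (-w)) (riemannZeta w) := by
    have := hsum.hasSum_iff.mpr (zeta_eq_tsum_one_div_nat_cpow hw).symm
    simpa [Complex.cpow_neg, one_div] using this
  have hsupp : Function.support (fun n : ℕ => (n : ℂ) ^ (-w)) ⊆ {n : ℕ | 0 < n} := by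
    intro n hn
    rcases Nat.eq_zero_or_pos n with h0 | h0
    · exfalso; apply hn; simp [h0, Complex.zero_cpow (neg_ne_zero.mpr hw0)]
    · exact h0
  exact (hasSum_subtype_iff_of_support_subset hsupp).mpr h

private lemma HasSum.mulC {ι κ : Type*} {f : ι → ℂ} {g : κ → ℂ} {a b : ℂ}
    (hf : HasSum f a) (hg : HasSum g b) :
    HasSum (fun x : ι × κ => f x.1 * g x.2) (a * b) :=
  hf.mul hg ((hf.summable.norm.mul_norm hg.summable.norm).of_norm)

private lemma key_cpow2 (w2 w3 : ℂ) {g c d : ℕ} (hg : 0 < g) (hc : 0 < c) (hd : 0 < d) :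
    ((g : ℂ)) ^ (-(w2 + w3)) * (((c : ℂ)) ^ (-w2) * ((d : ℂ)) ^ (-w3))
      = ((g * c : ℕ) : ℂ) ^ (-w2) * ((g * d : ℕ) : ℂ) ^ (-w3) := by
  rw [natpos_cpow_eq hg, natpos_cpow_eq hc, natpos_cpow_eq hd,
    natpos_cpow_eq (Nat.mul_pos hg hc), natpos_cpow_eq (Nat.mul_pos hg hd)]
  have h1 : Real.log ((g * c : ℕ) : ℝ) = Real.log g + Real.log c := by
    push_cast
    exact Real.log_mul (by positivity) (by positivity)
  have h2 : Real.log ((g * d : ℕ) : ℝ) = Real.log g + Real.log d := by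
    push_cast
    exact Real.log_mul (by positivity) (by positivity)
  rw [h1, h2]
  simp only [← Complex.exp_add]
  congr 1
  push_cast
  ring

private lemma key_cpow (α β γ δ s : ℂ) {a b c d : ℕ}
    (ha : 0 < a) (hb : 0 < b) (hc : 0 < c) (hd : 0 < d) :
    ((a * c : ℕ) : ℂ) ^ (-α) * (((b * d : ℕ) : ℂ) ^ (-β) *
        (((a * d : ℕ) : ℂ) ^ (-γ) * ((b * c : ℕ) : ℂ) ^ (-δ))) *
      ((a * c * (b * d) : ℕ) : ℂ) ^ (-(1 + s))
    = (a : ℂ) ^ (-(1 + s + α + γ)) * ((b : ℂ) ^ (-(1 + s + β + δ)) *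
        ((c : ℂ) ^ (-(1 + s + α + δ)) * (d : ℂ) ^ (-(1 + s + β + γ)))) := by
  rw [natpos_cpow_eq (Nat.mul_pos ha hc), natpos_cpow_eq (Nat.mul_pos hb hd),
    natpos_cpow_eq (Nat.mul_pos ha hd), natpos_cpow_eq (Nat.mul_pos hb hc),
    natpos_cpow_eq (Nat.mul_pos (Nat.mul_pos ha hc) (Nat.mul_pos hb hd)),
    natpos_cpow_eq ha, natpos_cpow_eq hb, natpos_cpow_eq hc, natpos_cpow_eq hd]
  have l : ∀ x y : ℕ, 0 < x → 0 < y →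
      Real.log ((x * y : ℕ) : ℝ) = Real.log x + Real.log y := by
    intro x y hx hy
    push_cast
    exact Real.log_mul (by positivity) (by positivity)
  rw [l _ _ (Nat.mul_pos ha hc) (Nat.mul_pos hb hd), l _ _ ha hc, l _ _ hb hd,
    l _ _ ha hd, l _ _ hb hc]
  simp only [← Complex.exp_add]
  congr 1
  push_cast
  ring

private abbrev Cop : Type := {p : ℕ+ × ℕ+ // Nat.Coprime (p.1 : ℕ) (p.2 : ℕ)}

private abbrev Quad : Type :=
  {q : ℕ+ × ℕ+ × ℕ+ × ℕ+ // (q.1 : ℕ) * (q.2.1 : ℕ) = (q.2.2.1 : ℕ) * (q.2.2.2 : ℕ)}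

private def e1 : ℕ+ × Cop → ℕ+ × ℕ+ := fun x => (x.1 * x.2.1.1, x.1 * x.2.1.2)

private lemma e1_bij : Function.Bijective e1 := by
  constructor
  · rintro ⟨g, ⟨⟨c, d⟩, hcd⟩⟩ ⟨g', ⟨⟨c', d'⟩, hcd'⟩⟩ h
    have h1' : (g : ℕ) * c = (g' : ℕ) * c' := by
      exact_mod_cast congrArg (fun p : ℕ+ × ℕ+ => (p.1 : ℕ)) h
    have h2' : (g : ℕ) * d = (g' : ℕ) * d' := by
      exact_mod_cast congrArg (fun p : ℕ+ × ℕ+ => (p.2 : ℕ)) h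
    have hg : (g : ℕ) = g' := by
      have := congrArg₂ Nat.gcd h1' h2'
      rwa [Nat.gcd_mul_left, Nat.gcd_mul_left, hcd, hcd', mul_one, mul_one] at this
    obtain rfl : g = g' := PNat.coe_injective hg
    obtain rfl : c = c' := PNat.coe_injective (Nat.eq_of_mul_eq_mul_left g.pos h1')
    obtain rfl : d = d' := PNat.coe_injective (Nat.eq_of_mul_eq_mul_left g.pos h2')
    rfl
  · rintro ⟨y₁, y₂⟩
    have hgpos : 0 < Nat.gcd (y₁ : ℕ) (y₂ : ℕ) := Nat.gcd_pos_of_pos_left _ y₁.pos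
    set gn := Nat.gcd (y₁ : ℕ) (y₂ : ℕ) with hgn
    have hc : 0 < (y₁ : ℕ) / gn := Nat.div_pos (Nat.le_of_dvd y₁.pos (Nat.gcd_dvd_left _ _)) hgpos
    have hd : 0 < (y₂ : ℕ) / gn := Nat.div_pos (Nat.le_of_dvd y₂.pos (Nat.gcd_dvd_right _ _)) hgpos
    refine ⟨⟨⟨gn, hgpos⟩, ⟨(⟨_, hc⟩, ⟨_, hd⟩), Nat.coprime_div_gcd_div_gcd hgpos⟩⟩, ?_⟩
    simp only [e1, Prod.mk.injEq]
    constructor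
    · apply PNat.coe_injective
      show gn * ((y₁ : ℕ) / gn) = (y₁ : ℕ)
      exact Nat.mul_div_cancel' (Nat.gcd_dvd_left _ _)
    · apply PNat.coe_injective
      show gn * ((y₂ : ℕ) / gn) = (y₂ : ℕ)
      exact Nat.mul_div_cancel' (Nat.gcd_dvd_right _ _)

private def e2 : ℕ+ × ℕ+ × Cop → Quad := fun x =>
  ⟨(x.1 * x.2.2.1.1, x.2.1 * x.2.2.1.2, x.1 * x.2.2.1.2, x.2.1 * x.2.2.1.1), by
    push_cast; ring⟩

private lemma e2_bij : Function.Bijective e2 := by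
  constructor
  · rintro ⟨a, b, ⟨⟨c, d⟩, hcd⟩⟩ ⟨a', b', ⟨⟨c', d'⟩, hcd'⟩⟩ h
    have hval := congrArg Subtype.val h
    have h1' : (a : ℕ) * c = (a' : ℕ) * c' := by
      exact_mod_cast congrArg (fun q : ℕ+ × ℕ+ × ℕ+ × ℕ+ => (q.1 : ℕ)) hval
    have h2' : (b : ℕ) * d = (b' : ℕ) * d' := by
      exact_mod_cast congrArg (fun q : ℕ+ × ℕ+ × ℕ+ × ℕ+ => (q.2.1 : ℕ)) hval
    have h3' : (a : ℕ) * d = (a' : ℕ) * d' := by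
      exact_mod_cast congrArg (fun q : ℕ+ × ℕ+ × ℕ+ × ℕ+ => (q.2.2.1 : ℕ)) hval
    have ha : (a : ℕ) = a' := by
      have := congrArg₂ Nat.gcd h1' h3'
      rwa [Nat.gcd_mul_left, Nat.gcd_mul_left, hcd, hcd', mul_one, mul_one] at this
    obtain rfl : a = a' := PNat.coe_injective ha
    obtain rfl : c = c' := PNat.coe_injective (Nat.eq_of_mul_eq_mul_left a.pos h1')
    obtain rfl : d = d' := PNat.coe_injective (Nat.eq_of_mul_eq_mul_left a.pos h3')
    obtain rfl : b = b' := PNat.coe_injective (Nat.eq_of_mul_eq_mul_right d.pos h2')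
    rfl
  · rintro ⟨⟨n₁, n₂, n₃, n₄⟩, hq⟩
    have hq' : (n₁ : ℕ) * n₂ = (n₃ : ℕ) * n₄ := hq
    have hgpos : 0 < Nat.gcd (n₁ : ℕ) (n₃ : ℕ) := Nat.gcd_pos_of_pos_left _ n₁.pos
    set gn := Nat.gcd (n₁ : ℕ) (n₃ : ℕ) with hgn
    set cn := (n₁ : ℕ) / gn with hcn
    set dn := (n₃ : ℕ) / gn with hdn
    have hcop : Nat.Coprime cn dn := Nat.coprime_div_gcd_div_gcd hgpos
    have hcpos : 0 < cn := Nat.div_pos (Nat.le_of_dvd n₁.pos (Nat.gcd_dvd_left _ _)) hgpos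
    have hdpos : 0 < dn := Nat.div_pos (Nat.le_of_dvd n₃.pos (Nat.gcd_dvd_right _ _)) hgpos
    have hn₁ : gn * cn = (n₁ : ℕ) := Nat.mul_div_cancel' (Nat.gcd_dvd_left _ _)
    have hn₃ : gn * dn = (n₃ : ℕ) := Nat.mul_div_cancel' (Nat.gcd_dvd_right _ _)
    have hkey : cn * (n₂ : ℕ) = dn * (n₄ : ℕ) := by
      apply Nat.eq_of_mul_eq_mul_left hgpos
      calc gn * (cn * n₂) = (gn * cn) * n₂ := by ring
        _ = (n₁ : ℕ) * n₂ := by rw [hn₁]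
        _ = (n₃ : ℕ) * n₄ := hq'
        _ = (gn * dn) * n₄ := by rw [hn₃]
        _ = gn * (dn * n₄) := by ring
    have hdvd : dn ∣ (n₂ : ℕ) :=
      Nat.Coprime.dvd_of_dvd_mul_left hcop.symm ⟨(n₄ : ℕ), hkey⟩
    set bn := (n₂ : ℕ) / dn with hbn
    have hbpos : 0 < bn := Nat.div_pos (Nat.le_of_dvd n₂.pos hdvd) hdpos
    have hn₂ : bn * dn = (n₂ : ℕ) := Nat.div_mul_cancel hdvd
    have hn₄ : bn * cn = (n₄ : ℕ) := by
      apply Nat.eq_of_mul_eq_mul_left hdpos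
      calc dn * (bn * cn) = cn * (bn * dn) := by ring
        _ = cn * n₂ := by rw [hn₂]
        _ = dn * n₄ := hkey
    refine ⟨⟨⟨gn, hgpos⟩, ⟨bn, hbpos⟩, ⟨(⟨cn, hcpos⟩, ⟨dn, hdpos⟩), hcop⟩⟩, ?_⟩
    apply Subtype.ext
    simp only [e2, Prod.mk.injEq]
    exact ⟨PNat.coe_injective hn₁, PNat.coe_injective hn₂, PNat.coe_injective hn₃,
      PNat.coe_injective hn₄⟩

private abbrev Fib (n : ℕ) : Type :=
  ((Nat.divisorsAntidiagonal (n + 1)) ×ˢ (Nat.divisorsAntidiagonal (n + 1)) :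
    Finset ((ℕ × ℕ) × ℕ × ℕ))

private lemma fib_prop {n : ℕ} (x : Fib n) :
    x.1.1.1 * x.1.1.2 = n + 1 ∧ x.1.2.1 * x.1.2.2 = n + 1 ∧
      0 < x.1.1.1 ∧ 0 < x.1.1.2 ∧ 0 < x.1.2.1 ∧ 0 < x.1.2.2 := by
  have h1 := (Finset.mem_product.1 x.2).1
  have h2 := (Finset.mem_product.1 x.2).2
  rw [Nat.mem_divisorsAntidiagonal] at h1 h2
  refine ⟨h1.1, h2.1, ?_, ?_, ?_, ?_⟩ <;>
    · apply Nat.pos_of_ne_zero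
      intro h0
      first
        | (rw [h0] at h1; simp at h1)
        | (rw [h0] at h2; simp at h2)

private def e3 : (Σ n : ℕ, Fib n) → Quad := fun x =>
  ⟨(⟨x.2.1.1.1, (fib_prop x.2).2.2.1⟩, ⟨x.2.1.1.2, (fib_prop x.2).2.2.2.1⟩,
    ⟨x.2.1.2.1, (fib_prop x.2).2.2.2.2.1⟩, ⟨x.2.1.2.2, (fib_prop x.2).2.2.2.2.2⟩), by
      show x.2.1.1.1 * x.2.1.1.2 = x.2.1.2.1 * x.2.1.2.2
      rw [(fib_prop x.2).1, (fib_prop x.2).2.1]⟩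

private lemma e3_bij : Function.Bijective e3 := by
  constructor
  · rintro ⟨n, ⟨p, hp⟩⟩ ⟨m, ⟨q, hq⟩⟩ h
    have hval := congrArg Subtype.val h
    simp only [e3, Prod.mk.injEq, Subtype.mk.injEq] at hval
    have h1 := congrArg (fun x : ℕ+ × ℕ+ × ℕ+ × ℕ+ => x.1) hval
    have h2 := congrArg (fun x : ℕ+ × ℕ+ × ℕ+ × ℕ+ => x.2.1) hval
    have h3 := congrArg (fun x : ℕ+ × ℕ+ × ℕ+ × ℕ+ => x.2.2.1) hval
    have h4 := congrArg (fun x : ℕ+ × ℕ+ × ℕ+ × ℕ+ => x.2.2.2) hval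
    have hpq : p = q := by
      apply Prod.ext <;> apply Prod.ext
      · exact Subtype.ext_iff.1 h1
      · exact Subtype.ext_iff.1 h2
      · exact Subtype.ext_iff.1 h3
      · exact Subtype.ext_iff.1 h4
    have hnm : n = m := by
      have a1 := (fib_prop (⟨p, hp⟩ : Fib n)).1
      have a2 := (fib_prop (⟨q, hq⟩ : Fib m)).1
      simp only at a1 a2
      rw [hpq] at a1
      omega
    subst hnm
    subst hpq
    rfl
  · rintro ⟨⟨n₁, n₂, n₃, n₄⟩, hq⟩
    have hq' : (n₁ : ℕ) * n₂ = (n₃ : ℕ) * n₄ := hq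
    have hpos : 0 < (n₁ : ℕ) * n₂ := Nat.mul_pos n₁.pos n₂.pos
    refine ⟨⟨(n₁ : ℕ) * n₂ - 1, ⟨(((n₁ : ℕ), (n₂ : ℕ)), ((n₃ : ℕ), (n₄ : ℕ))), ?_⟩⟩, ?_⟩
    · rw [Finset.mem_product, Nat.mem_divisorsAntidiagonal, Nat.mem_divisorsAntidiagonal]
      refine ⟨⟨?_, ?_⟩, ⟨?_, ?_⟩⟩ <;> simp <;> omega
    · rfl

set_option maxHeartbeats 1000000 in
/-- Ramanujan's identity: Σ_{n≥1} σ_{α,β}(n) σ_{γ,δ}(n) n^{-(1+s)}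
= ζ(1+s+α+γ)ζ(1+s+α+δ)ζ(1+s+β+γ)ζ(1+s+β+δ)/ζ(2+2s+α+β+γ+δ), for Re(s) large. -/
theorem sigmaShift_dirichlet_series (α β γ δ : ℂ)
    (h1 : 1 < (1 + α + γ).re) (h2 : 1 < (1 + α + δ).re)
    (h3 : 1 < (1 + β + γ).re) (h4 : 1 < (1 + β + δ).re) :
    ∃ S : ℝ, ∀ s : ℂ, S < s.re →
      HasSum (fun n : ℕ =>
          sigmaShift α β (n + 1) * sigmaShift γ δ (n + 1) / ((n + 1 : ℕ) : ℂ) ^ (1 + s))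
        (riemannZeta (1 + s + α + γ) * riemannZeta (1 + s + α + δ) *
            riemannZeta (1 + s + β + γ) * riemannZeta (1 + s + β + δ) /
          riemannZeta (2 + 2 * s + α + β + γ + δ)) := by
  refine ⟨0, fun s hs => ?_⟩
  set w1 := 1 + s + α + γ with hw1def
  set w2 := 1 + s + α + δ with hw2def
  set w3 := 1 + s + β + γ with hw3def
  set w4 := 1 + s + β + δ with hw4def
  have hw1 : 1 < w1.re := by
    simp only [hw1def, Complex.add_re, Complex.one_re] at h1 ⊢; linarith
  have hw2 : 1 < w2.re := by
    simp only [hw2def, Complex.add_re, Complex.one_re] at h2 ⊢; linarith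
  have hw3 : 1 < w3.re := by
    simp only [hw3def, Complex.add_re, Complex.one_re] at h3 ⊢; linarith
  have hw4 : 1 < w4.re := by
    simp only [hw4def, Complex.add_re, Complex.one_re] at h4 ⊢; linarith
  have hw23 : 1 < (w2 + w3).re := by
    rw [Complex.add_re]; linarith
  have hz1 := hasSum_zeta_pnat hw1
  have hz2 := hasSum_zeta_pnat hw2
  have hz3 := hasSum_zeta_pnat hw3
  have hz4 := hasSum_zeta_pnat hw4
  have hz23 := hasSum_zeta_pnat hw23
  -- the coprime-pairs sum
  have hcopS : Summable (fun p : Cop => ((p.1.1 : ℕ) : ℂ) ^ (-w2) * ((p.1.2 : ℕ) : ℂ) ^ (-w3)) :=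
    (hz2.mulC hz3).summable.subtype {p : ℕ+ × ℕ+ | Nat.Coprime (p.1 : ℕ) (p.2 : ℕ)}
  set T := ∑' p : Cop, ((p.1.1 : ℕ) : ℂ) ^ (-w2) * ((p.1.2 : ℕ) : ℂ) ^ (-w3) with hTdef
  have hT : HasSum (fun p : Cop => ((p.1.1 : ℕ) : ℂ) ^ (-w2) * ((p.1.2 : ℕ) : ℂ) ^ (-w3)) T :=
    hcopS.hasSum
  have hprod : HasSum
      (fun x : ℕ+ × Cop => ((x.1 : ℕ) : ℂ) ^ (-(w2 + w3)) *
        (((x.2.1.1 : ℕ) : ℂ) ^ (-w2) * ((x.2.1.2 : ℕ) : ℂ) ^ (-w3)))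
      (riemannZeta (w2 + w3) * T) := by
    have h := hz23.mulC hT
    exact h
  have hcomp1 : (fun y : ℕ+ × ℕ+ => ((y.1 : ℕ) : ℂ) ^ (-w2) * ((y.2 : ℕ) : ℂ) ^ (-w3)) ∘ e1
      = fun x : ℕ+ × Cop => ((x.1 : ℕ) : ℂ) ^ (-(w2 + w3)) *
        (((x.2.1.1 : ℕ) : ℂ) ^ (-w2) * ((x.2.1.2 : ℕ) : ℂ) ^ (-w3)) := by
    funext x
    simp only [Function.comp_apply, e1, PNat.mul_coe]
    exact (key_cpow2 w2 w3 x.1.pos x.2.1.1.pos x.2.1.2.pos).symm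
  have hfull : HasSum (fun y : ℕ+ × ℕ+ => ((y.1 : ℕ) : ℂ) ^ (-w2) * ((y.2 : ℕ) : ℂ) ^ (-w3))
      (riemannZeta (w2 + w3) * T) := by
    rw [← hcomp1] at hprod
    exact (Equiv.ofBijective e1 e1_bij).hasSum_iff.mp hprod
  have huniq : riemannZeta w2 * riemannZeta w3 = riemannZeta (w2 + w3) * T :=
    (hz2.mulC hz3).unique hfull
  have hzero : riemannZeta (w2 + w3) ≠ 0 := riemannZeta_ne_zero_of_one_lt_re hw23
  have hTval : T = riemannZeta w2 * riemannZeta w3 / riemannZeta (w2 + w3) := by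
    rw [eq_div_iff hzero, mul_comm]
    exact huniq.symm
  -- the big quintuple product
  have hbig : HasSum
      (fun x : ℕ+ × ℕ+ × Cop => ((x.1 : ℕ) : ℂ) ^ (-w1) * (((x.2.1 : ℕ) : ℂ) ^ (-w4) *
        (((x.2.2.1.1 : ℕ) : ℂ) ^ (-w2) * ((x.2.2.1.2 : ℕ) : ℂ) ^ (-w3))))
      (riemannZeta w1 * (riemannZeta w4 * T)) := by
    have h := hz1.mulC (hz4.mulC hT)
    exact h
  -- transport along e2 to Quad
  set FQ : Quad → ℂ := fun q =>
    ((q.1.1 : ℕ) : ℂ) ^ (-α) * (((q.1.2.1 : ℕ) : ℂ) ^ (-β) *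
      (((q.1.2.2.1 : ℕ) : ℂ) ^ (-γ) * ((q.1.2.2.2 : ℕ) : ℂ) ^ (-δ))) *
      (((q.1.1 : ℕ) * (q.1.2.1 : ℕ) : ℕ) : ℂ) ^ (-(1 + s)) with hFQdef
  have hcomp2 : FQ ∘ e2 = fun x : ℕ+ × ℕ+ × Cop =>
      ((x.1 : ℕ) : ℂ) ^ (-w1) * (((x.2.1 : ℕ) : ℂ) ^ (-w4) *
        (((x.2.2.1.1 : ℕ) : ℂ) ^ (-w2) * ((x.2.2.1.2 : ℕ) : ℂ) ^ (-w3))) := by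
    funext x
    simp only [Function.comp_apply, hFQdef, e2, PNat.mul_coe]
    exact key_cpow α β γ δ s x.1.pos x.2.1.pos x.2.2.1.1.pos x.2.2.1.2.pos
  have hQ : HasSum FQ (riemannZeta w1 * (riemannZeta w4 * T)) := by
    rw [← hcomp2] at hbig
    exact (Equiv.ofBijective e2 e2_bij).hasSum_iff.mp hbig
  have hsig : HasSum (FQ ∘ e3) (riemannZeta w1 * (riemannZeta w4 * T)) :=
    (Equiv.ofBijective e3 e3_bij).hasSum_iff.mpr hQ
  -- fiberwise sums
  have hfib : ∀ n : ℕ, HasSum (fun c : Fib n => (FQ ∘ e3) ⟨n, c⟩)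
      (sigmaShift α β (n + 1) * sigmaShift γ δ (n + 1) / ((n + 1 : ℕ) : ℂ) ^ (1 + s)) := by
    intro n
    have h0 : HasSum (fun c : Fib n => (FQ ∘ e3) ⟨n, c⟩)
        (∑ c : Fib n, (FQ ∘ e3) ⟨n, c⟩) := hasSum_fintype _
    have hval : (∑ c : Fib n, (FQ ∘ e3) ⟨n, c⟩)
        = sigmaShift α β (n + 1) * sigmaShift γ δ (n + 1) / ((n + 1 : ℕ) : ℂ) ^ (1 + s) := by
      have hstep1 : (∑ c : Fib n, (FQ ∘ e3) ⟨n, c⟩)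
          = ∑ p ∈ (Nat.divisorsAntidiagonal (n + 1)) ×ˢ (Nat.divisorsAntidiagonal (n + 1)),
              ((p.1.1 : ℂ) ^ (-α) * ((p.1.2 : ℂ) ^ (-β) *
                ((p.2.1 : ℂ) ^ (-γ) * (p.2.2 : ℂ) ^ (-δ))) *
                ((p.1.1 * p.1.2 : ℕ) : ℂ) ^ (-(1 + s))) :=
        Finset.sum_coe_sort
          ((Nat.divisorsAntidiagonal (n + 1)) ×ˢ (Nat.divisorsAntidiagonal (n + 1)))
          (fun p => ((p.1.1 : ℂ) ^ (-α) * ((p.1.2 : ℂ) ^ (-β) *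
            ((p.2.1 : ℂ) ^ (-γ) * (p.2.2 : ℂ) ^ (-δ))) *
            ((p.1.1 * p.1.2 : ℕ) : ℂ) ^ (-(1 + s))))
      rw [hstep1, Finset.sum_product]
      have hstep2 : ∀ x ∈ Nat.divisorsAntidiagonal (n + 1),
          (∑ y ∈ Nat.divisorsAntidiagonal (n + 1),
            ((x.1 : ℂ) ^ (-α) * ((x.2 : ℂ) ^ (-β) *
              ((y.1 : ℂ) ^ (-γ) * (y.2 : ℂ) ^ (-δ))) *
              ((x.1 * x.2 : ℕ) : ℂ) ^ (-(1 + s))))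
          = ∑ y ∈ Nat.divisorsAntidiagonal (n + 1),
            (((x.1 : ℂ) ^ (-α) * (x.2 : ℂ) ^ (-β)) * ((y.1 : ℂ) ^ (-γ) * (y.2 : ℂ) ^ (-δ)) *
              (((n + 1 : ℕ) : ℂ)) ^ (-(1 + s))) := by
        intro x hx
        refine Finset.sum_congr rfl fun y hy => ?_
        rw [(Nat.mem_divisorsAntidiagonal.1 hx).1]
        ring
      rw [Finset.sum_congr rfl hstep2]
      rw [sigmaShift, sigmaShift, Complex.cpow_neg, div_eq_mul_inv]
      rw [Finset.sum_mul_sum, Finset.sum_mul]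
      refine Finset.sum_congr rfl fun x hx => ?_
      rw [Finset.sum_mul]
    exact hval ▸ h0
  have hmain := hsig.sigma hfib
  have harg : 2 + 2 * s + α + β + γ + δ = w2 + w3 := by
    rw [hw2def, hw3def]; ring
  have hvalue : riemannZeta w1 * riemannZeta w2 * riemannZeta w3 * riemannZeta w4 /
      riemannZeta (w2 + w3) = riemannZeta w1 * (riemannZeta w4 * T) := by
    rw [hTval]
    field_simp
  rw [harg, hvalue]
  exact hmain
end

section
/- For a prime p, a nonnegative integer h_p, and complex shifts α, β, γ, δ (with p^{-γ} ≠ p^{-δ} and the relevant geometric series convergent), one has Σ_{j=0}^∞ σ_{α,β}(p^j) σ_{γ,δ}(p^{j+h_p}) p^{-j(s+1)} = (p^{-γ} - p^{-δ})^{-1} [ p^{-γ(1+h_p)} / ((1 - p^{-1-s-α-γ})(1 - p^{-1-s-β-γ})) - p^{-δ(1+h_p)} / ((1 - p^{-1-s-α-δ})(1 - p^{-1-s-β-δ})) ]. -/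
open Finset

/-- σ_{α,β}(p^m) = Σ_{0≤j≤m} p^{-jα-(m-j)β}. -/
noncomputable def sigmaPP (α β : ℂ) (p m : ℕ) : ℂ :=
  ∑ j ∈ Finset.range (m + 1), (p : ℂ) ^ (-(j : ℂ) * α - ((m - j : ℕ) : ℂ) * β)

lemma cauchy_geom {a b : ℂ} (ha : ‖a‖ < 1) (hb : ‖b‖ < 1) :
    HasSum (fun j : ℕ => ∑ k ∈ range (j + 1), a ^ k * b ^ (j - k))
      ((1 - a)⁻¹ * (1 - b)⁻¹) := by
  have Ha : Summable fun n : ℕ => ‖a ^ n‖ := by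
    simpa [norm_pow] using summable_geometric_of_lt_one (norm_nonneg a) ha
  have Hb : Summable fun n : ℕ => ‖b ^ n‖ := by
    simpa [norm_pow] using summable_geometric_of_lt_one (norm_nonneg b) hb
  have := hasSum_sum_range_mul_of_summable_norm (f := fun n : ℕ => a ^ n)
    (g := fun n : ℕ => b ^ n) Ha Hb
  rwa [(hasSum_geometric_of_norm_lt_one ha).tsum_eq,
    (hasSum_geometric_of_norm_lt_one hb).tsum_eq] at this

lemma sigmaPP_eq (α β : ℂ) (p : ℕ) (hp : (p : ℂ) ≠ 0) (n : ℕ) :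
    sigmaPP α β p n = ∑ k ∈ range (n + 1),
      ((p : ℂ) ^ (-α)) ^ k * ((p : ℂ) ^ (-β)) ^ (n - k) := by
  unfold sigmaPP
  refine Finset.sum_congr rfl fun k _ => ?_
  have h : -(k : ℂ) * α - ((n - k : ℕ) : ℂ) * β
      = (k : ℂ) * (-α) + ((n - k : ℕ) : ℂ) * (-β) := by ring
  rw [h, Complex.cpow_add _ _ hp, Complex.cpow_nat_mul, Complex.cpow_nat_mul]

lemma sigmaPP_mul_sub (γ δ : ℂ) (p : ℕ) (hp : (p : ℂ) ≠ 0) (n : ℕ) :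
    sigmaPP γ δ p n * ((p : ℂ) ^ (-γ) - (p : ℂ) ^ (-δ)) =
      ((p : ℂ) ^ (-γ)) ^ (n + 1) - ((p : ℂ) ^ (-δ)) ^ (n + 1) := by
  set u := (p : ℂ) ^ (-γ)
  set v := (p : ℂ) ^ (-δ)
  rw [sigmaPP_eq γ δ p hp n]
  induction n with
  | zero => simp
  | succ n ih =>
    have h : ∑ k ∈ range (n + 1 + 1), u ^ k * v ^ (n + 1 - k) =
        v * ∑ k ∈ range (n + 1), u ^ k * v ^ (n - k) + u ^ (n + 1) := by
      rw [Finset.sum_range_succ, Finset.mul_sum]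
      simp only [Nat.sub_self, pow_zero, mul_one, Nat.add_sub_cancel]
      congr 1
      refine Finset.sum_congr rfl fun k hk => ?_
      have hk' : k ≤ n := Nat.lt_succ_iff.mp (Finset.mem_range.mp hk)
      rw [Nat.succ_sub hk', pow_succ]
      ring
    rw [h, add_mul, mul_assoc, ih]
    ring

/-- Local computation: Σ_{j=0}^∞ σ_{α,β}(p^j) σ_{γ,δ}(p^{j+h_p}) p^{-j(s+1)}
= (p^{-γ}-p^{-δ})^{-1} [ p^{-γ(1+h_p)}/((1-p^{-1-s-α-γ})(1-p^{-1-s-β-γ}))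
- p^{-δ(1+h_p)}/((1-p^{-1-s-α-δ})(1-p^{-1-s-β-δ})) ]. -/
theorem sigmaPP_local_series (p : ℕ) (hp : p.Prime) (m : ℕ) (α β γ δ s : ℂ)
    (hγδ : (p : ℂ) ^ (-γ) ≠ (p : ℂ) ^ (-δ))
    (h1 : 0 < (1 + s + α + γ).re) (h2 : 0 < (1 + s + α + δ).re)
    (h3 : 0 < (1 + s + β + γ).re) (h4 : 0 < (1 + s + β + δ).re) :
    HasSum (fun j : ℕ => sigmaPP α β p j * sigmaPP γ δ p (j + m) *
        (p : ℂ) ^ (-(j : ℂ) * (s + 1)))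
      (((p : ℂ) ^ (-γ) - (p : ℂ) ^ (-δ))⁻¹ *
        ((p : ℂ) ^ (-γ * (1 + (m : ℂ))) /
            ((1 - (p : ℂ) ^ (-1 - s - α - γ)) * (1 - (p : ℂ) ^ (-1 - s - β - γ))) -
          (p : ℂ) ^ (-δ * (1 + (m : ℂ))) /
            ((1 - (p : ℂ) ^ (-1 - s - α - δ)) * (1 - (p : ℂ) ^ (-1 - s - β - δ))))) := by
  have hp1 : (1 : ℝ) < (p : ℝ) := by exact_mod_cast hp.one_lt
  have hp0 : (0 : ℝ) < (p : ℝ) := by linarith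
  have hq0 : (p : ℂ) ≠ 0 := by
    exact_mod_cast (Nat.cast_pos.mpr hp.pos).ne'
  have norm_lt : ∀ w : ℂ, 0 < w.re → ‖(p : ℂ) ^ (-w)‖ < 1 := by
    intro w hw
    have hc : ((p : ℕ) : ℂ) = (((p : ℝ)) : ℂ) := by norm_cast
    rw [hc, Complex.norm_cpow_eq_rpow_re_of_pos hp0]
    have h : ((p : ℝ) ^ ((-w).re)) < (p : ℝ) ^ (0 : ℝ) := by
      apply Real.rpow_lt_rpow_left_iff hp1 |>.mpr
      simpa using hw
    simpa using h
  have Hγ := cauchy_geom (norm_lt _ h1) (norm_lt _ h3)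
  have Hδ := cauchy_geom (norm_lt _ h2) (norm_lt _ h4)
  have e1 : -(1 + s + α + γ) = -1 - s - α - γ := by ring
  have e2 : -(1 + s + α + δ) = -1 - s - α - δ := by ring
  have e3 : -(1 + s + β + γ) = -1 - s - β - γ := by ring
  have e4 : -(1 + s + β + δ) = -1 - s - β - δ := by ring
  rw [e1, e3] at Hγ
  rw [e2, e4] at Hδ
  have key := ((Hγ.mul_left (((p : ℂ) ^ (-γ)) ^ (m + 1))).sub
    (Hδ.mul_left (((p : ℂ) ^ (-δ)) ^ (m + 1)))).mul_left
    ((p : ℂ) ^ (-γ) - (p : ℂ) ^ (-δ))⁻¹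
  have hprod : ∀ (w x : ℂ),
      (p : ℂ) ^ (-1 - s - x - w)
        = (p : ℂ) ^ (-x) * ((p : ℂ) ^ (-w) * (p : ℂ) ^ (-(s + 1))) := by
    intro w x
    rw [← Complex.cpow_add _ _ hq0, ← Complex.cpow_add _ _ hq0]
    ring_nf
  have hfun : ∀ j : ℕ,
      ((p : ℂ) ^ (-γ) - (p : ℂ) ^ (-δ))⁻¹ *
        (((p : ℂ) ^ (-γ)) ^ (m + 1) * ∑ k ∈ range (j + 1),
            ((p : ℂ) ^ (-1 - s - α - γ)) ^ k * ((p : ℂ) ^ (-1 - s - β - γ)) ^ (j - k) -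
          ((p : ℂ) ^ (-δ)) ^ (m + 1) * ∑ k ∈ range (j + 1),
            ((p : ℂ) ^ (-1 - s - α - δ)) ^ k * ((p : ℂ) ^ (-1 - s - β - δ)) ^ (j - k)) =
      sigmaPP α β p j * sigmaPP γ δ p (j + m) * (p : ℂ) ^ (-(j : ℂ) * (s + 1)) := by
    intro j
    have hσ : sigmaPP γ δ p (j + m) =
        (((p : ℂ) ^ (-γ)) ^ (j + m + 1) - ((p : ℂ) ^ (-δ)) ^ (j + m + 1)) *
          ((p : ℂ) ^ (-γ) - (p : ℂ) ^ (-δ))⁻¹ := by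
      rw [eq_mul_inv_iff_mul_eq₀ (sub_ne_zero.mpr hγδ)]
      exact sigmaPP_mul_sub γ δ p hq0 (j + m)
    have ht : (p : ℂ) ^ (-(j : ℂ) * (s + 1)) = ((p : ℂ) ^ (-(s + 1))) ^ j := by
      rw [← Complex.cpow_nat_mul]; ring_nf
    have sum1 : ∑ k ∈ range (j + 1),
        ((p : ℂ) ^ (-1 - s - α - γ)) ^ k * ((p : ℂ) ^ (-1 - s - β - γ)) ^ (j - k) =
        (∑ k ∈ range (j + 1), ((p : ℂ) ^ (-α)) ^ k * ((p : ℂ) ^ (-β)) ^ (j - k)) *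
          ((p : ℂ) ^ (-γ) * (p : ℂ) ^ (-(s + 1))) ^ j := by
      rw [Finset.sum_mul]
      refine Finset.sum_congr rfl fun k hk => ?_
      have hk' : k ≤ j := Nat.lt_succ_iff.mp (Finset.mem_range.mp hk)
      obtain ⟨d, rfl⟩ := Nat.exists_eq_add_of_le hk'
      simp only [Nat.add_sub_cancel_left]
      rw [hprod γ α, hprod γ β]
      ring
    have sum2 : ∑ k ∈ range (j + 1),
        ((p : ℂ) ^ (-1 - s - α - δ)) ^ k * ((p : ℂ) ^ (-1 - s - β - δ)) ^ (j - k) =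
        (∑ k ∈ range (j + 1), ((p : ℂ) ^ (-α)) ^ k * ((p : ℂ) ^ (-β)) ^ (j - k)) *
          ((p : ℂ) ^ (-δ) * (p : ℂ) ^ (-(s + 1))) ^ j := by
      rw [Finset.sum_mul]
      refine Finset.sum_congr rfl fun k hk => ?_
      have hk' : k ≤ j := Nat.lt_succ_iff.mp (Finset.mem_range.mp hk)
      obtain ⟨d, rfl⟩ := Nat.exists_eq_add_of_le hk'
      simp only [Nat.add_sub_cancel_left]
      rw [hprod δ α, hprod δ β]
      ring
    rw [hσ, ht, sigmaPP_eq α β p hq0 j, sum1, sum2]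
    ring
  have hval : ((p : ℂ) ^ (-γ)) ^ (m + 1) = (p : ℂ) ^ (-γ * (1 + (m : ℂ))) := by
    rw [← Complex.cpow_nat_mul]; congr 1; push_cast; ring
  have hval' : ((p : ℂ) ^ (-δ)) ^ (m + 1) = (p : ℂ) ^ (-δ * (1 + (m : ℂ))) := by
    rw [← Complex.cpow_nat_mul]; congr 1; push_cast; ring
  have hfe : (fun j : ℕ => sigmaPP α β p j * sigmaPP γ δ p (j + m) *
      (p : ℂ) ^ (-(j : ℂ) * (s + 1))) = fun j : ℕ =>
      ((p : ℂ) ^ (-γ) - (p : ℂ) ^ (-δ))⁻¹ *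
        (((p : ℂ) ^ (-γ)) ^ (m + 1) * ∑ k ∈ range (j + 1),
            ((p : ℂ) ^ (-1 - s - α - γ)) ^ k * ((p : ℂ) ^ (-1 - s - β - γ)) ^ (j - k) -
          ((p : ℂ) ^ (-δ)) ^ (m + 1) * ∑ k ∈ range (j + 1),
            ((p : ℂ) ^ (-1 - s - α - δ)) ^ k * ((p : ℂ) ^ (-1 - s - β - δ)) ^ (j - k)) :=
    funext fun j => (hfun j).symm
  have hvv : (((p : ℂ) ^ (-γ) - (p : ℂ) ^ (-δ))⁻¹ *
      ((p : ℂ) ^ (-γ * (1 + (m : ℂ))) /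
          ((1 - (p : ℂ) ^ (-1 - s - α - γ)) * (1 - (p : ℂ) ^ (-1 - s - β - γ))) -
        (p : ℂ) ^ (-δ * (1 + (m : ℂ))) /
          ((1 - (p : ℂ) ^ (-1 - s - α - δ)) * (1 - (p : ℂ) ^ (-1 - s - β - δ))))) =
      ((p : ℂ) ^ (-γ) - (p : ℂ) ^ (-δ))⁻¹ *
        (((p : ℂ) ^ (-γ)) ^ (m + 1) *
            ((1 - (p : ℂ) ^ (-1 - s - α - γ))⁻¹ * (1 - (p : ℂ) ^ (-1 - s - β - γ))⁻¹) -
          ((p : ℂ) ^ (-δ)) ^ (m + 1) *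
            ((1 - (p : ℂ) ^ (-1 - s - α - δ))⁻¹ * (1 - (p : ℂ) ^ (-1 - s - β - δ))⁻¹)) := by
    rw [← hval, ← hval', div_eq_mul_inv, div_eq_mul_inv, mul_inv, mul_inv]
  rw [hfe, hvv]
  exact key
end

section
/- For Re(a+b) > 1 and Re(c) > 0, Σ_{r≥1} Σ_{l≥1} c_l(r) l^{-(a+b)} r^{-(1+c)} = ζ(1+c) Σ_{l≥1} l^{-(a+b+c)} Σ_{d|l} d^c μ(d), where c_l(r) is the Ramanujan sum. -/
open Finset ArithmeticFunction
open scoped ArithmeticFunction.Moebius ArithmeticFunction.zeta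

/-- The Ramanujan sum c_l(r) = Σ*_{a mod l} e(ar/l), sum over a coprime to l. -/
noncomputable def ramanujanSum (l r : ℕ) : ℂ :=
  ∑ a ∈ Finset.range l, if Nat.gcd a l = 1 then
    Complex.exp (2 * Real.pi * Complex.I * a * r / l) else 0

lemma expSum (l r : ℕ) (hl : 0 < l) :
    ∑ a ∈ Finset.range l, Complex.exp (2 * Real.pi * Complex.I * a * r / l)
      = if l ∣ r then (l : ℂ) else 0 := by
  have hl0 : (l : ℂ) ≠ 0 := Nat.cast_ne_zero.2 hl.ne'
  by_cases h : l ∣ r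
  · obtain ⟨k, rfl⟩ := h
    rw [if_pos (dvd_mul_right l k)]
    have : ∀ a ∈ Finset.range l, Complex.exp (2 * Real.pi * Complex.I * a * (l * k : ℕ) / l) = 1 := by
      intro a _
      have : (2 * Real.pi * Complex.I * a * ((l * k : ℕ) : ℂ) / l) = ((a * k : ℕ) : ℤ) * (2 * Real.pi * Complex.I) := by
        push_cast
        field_simp
      rw [this, Complex.exp_int_mul_two_pi_mul_I]
    rw [Finset.sum_congr rfl this]
    simp
  · rw [if_neg h]
    set x : ℂ := Complex.exp (2 * Real.pi * Complex.I * r / l) with hx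
    have hterm : ∀ a : ℕ, Complex.exp (2 * Real.pi * Complex.I * a * r / l) = x ^ a := by
      intro a
      rw [hx, ← Complex.exp_nat_mul]
      congr 1
      field_simp
    have hxl : x ^ l = 1 := by
      rw [hx, ← Complex.exp_nat_mul]
      have : (l : ℂ) * (2 * Real.pi * Complex.I * r / l) = (r : ℤ) * (2 * Real.pi * Complex.I) := by
        push_cast; field_simp
      rw [this, Complex.exp_int_mul_two_pi_mul_I]
    have hx1 : x ≠ 1 := by
      intro hx1
      rw [hx, Complex.exp_eq_one_iff] at hx1
      obtain ⟨n, hn⟩ := hx1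
      apply h
      have h2 : (2 * Real.pi * Complex.I : ℂ) ≠ 0 := by
        simp [Real.pi_ne_zero, Complex.I_ne_zero]
      have : (r : ℂ) = n * l := by
        field_simp at hn
        have h3 : (2 * Real.pi * Complex.I) * (r : ℂ)
            = (2 * Real.pi * Complex.I) * ((n : ℂ) * l) := by linear_combination (2 * Real.pi * Complex.I) * hn
        exact mul_left_cancel₀ h2 h3
      have hr : (r : ℤ) = n * l := by exact_mod_cast this
      refine ⟨n.toNat, ?_⟩
      have hn0 : 0 ≤ n := by
        by_contra hneg
        push_neg at hneg
        have : (r : ℤ) < 0 := by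
          calc (r:ℤ) = n * l := hr
          _ < 0 := mul_neg_of_neg_of_pos hneg (by exact_mod_cast hl)
        omega
      have : (r : ℤ) = (l : ℤ) * n.toNat := by
        rw [Int.toNat_of_nonneg hn0, mul_comm]; exact hr
      exact_mod_cast this
    calc ∑ a ∈ Finset.range l, Complex.exp (2 * Real.pi * Complex.I * a * r / l)
        = ∑ a ∈ Finset.range l, x ^ a := Finset.sum_congr rfl fun a _ => hterm a
      _ = (x ^ l - 1) / (x - 1) := geom_sum_eq hx1 l
      _ = 0 := by rw [hxl]; simp

lemma moebius_sum_divisors (n : ℕ) :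
    ∑ d ∈ n.divisors, ((μ d : ℤ) : ℂ) = if n = 1 then 1 else 0 := by
  have h : ((μ * ζ : ArithmeticFunction ℤ) n : ℂ) = ((1 : ArithmeticFunction ℤ) n : ℂ) := by
    rw [moebius_mul_coe_zeta]
  rw [coe_mul_zeta_apply, one_apply] at h
  push_cast at h
  exact h


lemma tsum_shift (g : ℕ → ℂ) (h0 : g 0 = 0) : ∑' n : ℕ, g (n + 1) = ∑' n : ℕ, g n := by
  refine Function.Injective.tsum_eq (g := fun n : ℕ => n + 1) (fun x y h => by simpa using h) ?_
  intro x hx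
  rcases x with _ | x
  · exact absurd h0 hx
  · exact ⟨x, rfl⟩

lemma tsum_multiples (d : ℕ) (hd : 0 < d) (h : ℕ → ℂ)
    (hsupp : ∀ n : ℕ, ¬(d ∣ n ∧ n ≠ 0) → h n = 0) :
    ∑' m : ℕ, h (d * (m + 1)) = ∑' n : ℕ, h n := by
  refine Function.Injective.tsum_eq (g := fun m : ℕ => d * (m + 1)) ?_ ?_
  · intro x y hxy
    simp only at hxy
    have := Nat.eq_of_mul_eq_mul_left hd hxy
    omega
  · intro n hn
    rcases Classical.em (d ∣ n ∧ n ≠ 0) with ⟨⟨k, rfl⟩, hne⟩ | hcon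
    · have hk : 0 < k := by
        rcases Nat.eq_zero_or_pos k with rfl | h
        · simp at hne
        · exact h
      exact ⟨k - 1, by simp only [Nat.sub_add_cancel hk]⟩
    · exact absurd (hsupp n hcon) hn

lemma natmul_cpow (d m : ℕ) (s : ℂ) :
    ((d * m : ℕ) : ℂ) ^ s = ((d : ℕ) : ℂ) ^ s * ((m : ℕ) : ℂ) ^ s := by
  have := Complex.mul_cpow_ofReal_nonneg (Nat.cast_nonneg d) (Nat.cast_nonneg m) s
  push_cast at this ⊢
  exact this

lemma gcd_divisors_eq (l r : ℕ) (hl : l ≠ 0) :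
    (Nat.gcd l r).divisors = l.divisors.filter (· ∣ r) := by
  ext d
  simp only [Nat.mem_divisors, Nat.dvd_gcd_iff, Finset.mem_filter]
  constructor
  · rintro ⟨⟨h1, h2⟩, h3⟩; exact ⟨⟨h1, hl⟩, h2⟩
  · rintro ⟨⟨h1, h2⟩, h3⟩
    exact ⟨⟨h1, h3⟩, fun h => hl (Nat.gcd_eq_zero_iff.mp h).1⟩

lemma ramanujanSum_eq (l r : ℕ) (hl : 0 < l) :
    ramanujanSum l r = ∑ d ∈ (Nat.gcd l r).divisors, (d : ℂ) * ((μ (l / d) : ℤ) : ℂ) := by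
  have hl' : l ≠ 0 := hl.ne'
  set E : ℕ → ℂ := fun a => Complex.exp (2 * Real.pi * Complex.I * a * r / l) with hE
  have step1 : ramanujanSum l r
      = ∑ d ∈ l.divisors, ((μ d : ℤ) : ℂ) * ∑ a ∈ Finset.range l, (if d ∣ a then E a else 0) := by
    unfold ramanujanSum
    have h1 : ∀ a ∈ Finset.range l,
        (if Nat.gcd a l = 1 then E a else 0)
          = ∑ d ∈ l.divisors, (if d ∣ a then ((μ d : ℤ) : ℂ) * E a else 0) := by
      intro a _
      have hgcd : (Nat.gcd a l).divisors = l.divisors.filter (· ∣ a) := by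
        rw [Nat.gcd_comm]; exact gcd_divisors_eq l a hl'
      have h2 : (if Nat.gcd a l = 1 then E a else 0)
          = (∑ d ∈ (Nat.gcd a l).divisors, ((μ d : ℤ) : ℂ)) * E a := by
        rw [moebius_sum_divisors]
        by_cases h : Nat.gcd a l = 1 <;> simp [h]
      rw [h2, hgcd, Finset.sum_filter, Finset.sum_mul]
      exact Finset.sum_congr rfl fun d _ => by rw [ite_mul, zero_mul]
    rw [Finset.sum_congr rfl h1, Finset.sum_comm]
    refine Finset.sum_congr rfl fun d _ => ?_
    rw [Finset.mul_sum]
    exact Finset.sum_congr rfl fun a _ => by rw [mul_ite, mul_zero]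
  have step2 : ∀ d ∈ l.divisors,
      (∑ a ∈ Finset.range l, (if d ∣ a then E a else 0))
        = (if (l / d) ∣ r then ((l / d : ℕ) : ℂ) else 0) := by
    intro d hd
    have hd0 : 0 < d := Nat.pos_of_mem_divisors hd
    obtain ⟨hdl, -⟩ := Nat.mem_divisors.mp hd
    obtain ⟨q, hq⟩ := hdl
    have hq0 : 0 < q := by
      rcases Nat.eq_zero_or_pos q with h | h
      · subst h; rw [mul_zero] at hq; omega
      · exact h
    have hlq : l / d = q := by rw [hq, Nat.mul_div_cancel_left _ hd0]
    rw [hlq]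
    have hmap : (∑ a ∈ Finset.range l, (if d ∣ a then E a else 0))
        = ∑ m ∈ Finset.range q, E (d * m) := by
      rw [← Finset.sum_filter]
      refine Finset.sum_nbij' (fun a => a / d) (fun m => d * m) ?_ ?_ ?_ ?_ ?_
      · intro a ha
        simp only [Finset.mem_filter, Finset.mem_range] at ha
        rw [Finset.mem_range]
        refine Nat.div_lt_of_lt_mul ?_
        rw [← hq]
        exact ha.1
      · intro m hm
        rw [Finset.mem_range] at hm
        simp only [Finset.mem_filter, Finset.mem_range]
        refine ⟨?_, dvd_mul_right d m⟩
        rw [hq]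
        exact Nat.mul_lt_mul_of_pos_left hm hd0
      · intro a ha
        simp only [Finset.mem_filter] at ha
        exact Nat.mul_div_cancel' ha.2
      · intro m hm
        exact Nat.mul_div_cancel_left m hd0
      · intro a ha
        simp only [Finset.mem_filter] at ha
        obtain ⟨m, rfl⟩ := ha.2
        simp [Nat.mul_div_cancel_left m hd0]
    rw [hmap]
    have hEq : ∀ m, E (d * m) = Complex.exp (2 * Real.pi * Complex.I * m * r / q) := by
      intro m
      rw [hE]
      have hd0' : (d : ℂ) ≠ 0 := Nat.cast_ne_zero.2 hd0.ne'
      have hq0' : (q : ℂ) ≠ 0 := Nat.cast_ne_zero.2 hq0.ne'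
      simp only
      rw [hq]
      congr 1
      push_cast
      field_simp
    rw [Finset.sum_congr rfl (fun m _ => hEq m), expSum q r hq0]
  rw [step1]
  have hcomb : ∑ d ∈ l.divisors, ((μ d : ℤ) : ℂ) * ∑ a ∈ Finset.range l, (if d ∣ a then E a else 0)
      = ∑ d ∈ l.divisors, ((μ d : ℤ) : ℂ) * (if (l / d) ∣ r then ((l / d : ℕ) : ℂ) else 0) :=
    Finset.sum_congr rfl fun d hd => by rw [step2 d hd]
  rw [hcomb]
  have key : ∀ d ∈ l.divisors,
      ((μ d : ℤ) : ℂ) * (if (l / d) ∣ r then ((l / d : ℕ) : ℂ) else 0)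
        = (fun e => ((μ (l / e) : ℤ) : ℂ) * (if e ∣ r then (e : ℂ) else 0)) (l / d) := by
    intro d hd
    obtain ⟨hdl, -⟩ := Nat.mem_divisors.mp hd
    simp only
    rw [Nat.div_div_self hdl hl']
  rw [Finset.sum_congr rfl key, Nat.sum_div_divisors l
    (fun e => ((μ (l / e) : ℤ) : ℂ) * (if e ∣ r then (e : ℂ) else 0))]
  rw [gcd_divisors_eq l r hl', Finset.sum_filter]
  refine Finset.sum_congr rfl fun e _ => ?_
  by_cases h : e ∣ r <;> simp [h, mul_comm]

noncomputable abbrev muC : ℕ → ℂ := fun n => ((μ n : ℤ) : ℂ)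

noncomputable def Trm (s : ℂ) (d l : ℕ) : ℂ :=
  if d ∣ l then (d : ℂ) * muC (l / d) / (l : ℂ) ^ s else 0

lemma inner_l_sum (s : ℂ) (hs : 1 < s.re) (r : ℕ) (hr : 0 < r) :
    ∑' l : ℕ, ramanujanSum l r / (l : ℂ) ^ s
      = LSeries muC s * ∑ d ∈ r.divisors, (d : ℂ) / (d : ℂ) ^ s := by
  classical
  have hG : ∀ l : ℕ, ramanujanSum l r / (l : ℂ) ^ s = ∑ d ∈ r.divisors, Trm s d l := by
    intro l
    rcases Nat.eq_zero_or_pos l with rfl | hl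
    · simp [ramanujanSum, Trm, muC]
    · rw [ramanujanSum_eq l r hl, show Nat.gcd l r = Nat.gcd r l from Nat.gcd_comm l r,
        gcd_divisors_eq r l hr.ne', Finset.sum_div, Finset.sum_filter]
      exact Finset.sum_congr rfl fun d _ => by rw [Trm]
  have hTsum : ∀ d ∈ r.divisors, Summable (Trm s d) := by
    intro d hd
    have hd0 : 0 < d := Nat.pos_of_mem_divisors hd
    have hone : Summable fun n => ‖LSeries.term 1 s n‖ :=
      (LSeriesSummable_one_iff.mpr hs).norm
    refine Summable.of_norm_bounded (g := fun l => (d : ℝ) * ‖LSeries.term 1 s l‖)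
      (hone.mul_left _) ?_
    intro l
    rcases Nat.eq_zero_or_pos l with rfl | hl
    · simp [Trm, muC]
    · simp only [Trm]
      by_cases hdl : d ∣ l
      · simp only [hdl, if_true]
        have hterm1 : ‖LSeries.term 1 s l‖ = 1 / ‖(l : ℂ) ^ s‖ := by
          rw [LSeries.term_of_ne_zero hl.ne' 1 s, Pi.one_apply, norm_div, norm_one]
        have h1 : ‖(d : ℂ)‖ = (d : ℝ) := Complex.norm_natCast d
        have h2 : ‖muC (l / d)‖ ≤ 1 := by
          rw [Complex.norm_intCast]
          exact_mod_cast abs_moebius_le_one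
        rw [hterm1, norm_div, norm_mul, h1]
        calc (d : ℝ) * ‖muC (l / d)‖ / ‖(l : ℂ) ^ s‖
            ≤ (d : ℝ) * 1 / ‖(l : ℂ) ^ s‖ := by gcongr
          _ = (d : ℝ) * (1 / ‖(l : ℂ) ^ s‖) := by ring
      · simp only [hdl, if_false, norm_zero]
        positivity
  rw [tsum_congr hG, Summable.tsum_finsetSum hTsum]
  have hTval : ∀ d ∈ r.divisors,
      ∑' l : ℕ, Trm s d l = (d : ℂ) / (d : ℂ) ^ s * LSeries muC s := by
    intro d hd
    have hd0 : 0 < d := Nat.pos_of_mem_divisors hd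
    have hdC : ((d : ℕ) : ℂ) ≠ 0 := Nat.cast_ne_zero.2 hd0.ne'
    have hds : ((d : ℕ) : ℂ) ^ s ≠ 0 := by
      simp [Complex.cpow_eq_zero_iff, hdC]
    have hsupp : ∀ n : ℕ, ¬(d ∣ n ∧ n ≠ 0) → Trm s d n = 0 := by
      intro n hn
      rw [Trm]
      by_cases hdn : d ∣ n
      · have hn0 : n = 0 := by tauto
        subst hn0
        simp [muC]
      · simp [hdn]
    rw [← tsum_multiples d hd0 (Trm s d) hsupp]
    have hterm : ∀ m : ℕ, Trm s d (d * (m + 1))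
        = (d : ℂ) / (d : ℂ) ^ s * LSeries.term muC s (m + 1) := by
      intro m
      rw [Trm]
      simp only [dvd_mul_right, if_true]
      rw [Nat.mul_div_cancel_left _ hd0, natmul_cpow d (m + 1) s,
        LSeries.term_of_ne_zero (Nat.succ_ne_zero m) muC s]
      rw [div_mul_div_comm]
    rw [tsum_congr hterm, tsum_mul_left, tsum_shift (LSeries.term muC s) (LSeries.term_zero _ _)]
    rfl
  rw [Finset.sum_congr rfl hTval, ← Finset.sum_mul, mul_comm]

/-- Reduction of the double sum over Ramanujan sums:
Σ_{r,l≥1} c_l(r) l^{-(a+b)} r^{-(1+c)} = ζ(1+c) Σ_{l≥1} l^{-(a+b+c)} Σ_{d|l} d^c μ(d). -/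
theorem ramanujan_double_sum (a b c : ℂ) (hab : 1 < (a + b).re) (hc : 0 < c.re) :
    (∑' r : ℕ, ∑' l : ℕ,
        ramanujanSum (l + 1) (r + 1) / (((l + 1 : ℕ) : ℂ) ^ (a + b) * ((r + 1 : ℕ) : ℂ) ^ (1 + c)))
      = riemannZeta (1 + c) *
        ∑' l : ℕ, (((l + 1 : ℕ) : ℂ) ^ (a + b + c))⁻¹ *
          ∑ d ∈ (l + 1).divisors, (d : ℂ) ^ c * (moebius d : ℂ) := by
  classical
  have hsc : 1 < (a + b + c).re := by
    have : (a + b + c).re = (a + b).re + c.re := by simp [Complex.add_re]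
    rw [this]; linarith
  have h1c : 1 < (1 + c).re := by
    have : (1 + c).re = 1 + c.re := by simp [Complex.add_re]
    rw [this]; linarith
  set s : ℂ := a + b with hs_def
  set M : ℂ := LSeries muC s with hM
  -- the two auxiliary sequences
  set f₁ : ℕ → ℂ := fun n => (n : ℂ) / (n : ℂ) ^ s with hf₁
  set f₂ : ℕ → ℂ := fun n => (n : ℂ) ^ c * ((μ n : ℤ) : ℂ) with hf₂
  -- term identities
  have hterm₁ : LSeries.term f₁ (1 + c) = LSeries.term 1 (s + c) := by
    funext n
    rcases Nat.eq_zero_or_pos n with rfl | hn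
    · simp [LSeries.term]
    · have hnC : (n : ℂ) ≠ 0 := Nat.cast_ne_zero.2 hn.ne'
      have hp : (n : ℂ) ^ (s + c) ≠ 0 := by simp [Complex.cpow_eq_zero_iff, hnC]
      rw [LSeries.term_of_ne_zero hn.ne', LSeries.term_of_ne_zero hn.ne', Pi.one_apply, hf₁]
      simp only
      rw [div_div, ← Complex.cpow_add _ _ hnC, show s + (1 + c) = (s + c) + 1 by ring,
        Complex.cpow_add _ _ hnC, Complex.cpow_one]
      field_simp
  have hterm₂ : LSeries.term f₂ (s + c) = LSeries.term muC s := by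
    funext n
    rcases Nat.eq_zero_or_pos n with rfl | hn
    · simp [LSeries.term]
    · have hnC : (n : ℂ) ≠ 0 := Nat.cast_ne_zero.2 hn.ne'
      have hpc : (n : ℂ) ^ c ≠ 0 := by simp [Complex.cpow_eq_zero_iff, hnC]
      have hps : (n : ℂ) ^ s ≠ 0 := by simp [Complex.cpow_eq_zero_iff, hnC]
      rw [LSeries.term_of_ne_zero hn.ne', LSeries.term_of_ne_zero hn.ne', hf₂]
      simp only [muC]
      rw [Complex.cpow_add _ _ hnC]
      field_simp
  -- summability
  have hsum1c : LSeriesSummable 1 (1 + c) := LSeriesSummable_one_iff.mpr h1c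
  have hsumsc : LSeriesSummable 1 (s + c) := LSeriesSummable_one_iff.mpr hsc
  have hsumf₁ : LSeriesSummable f₁ (1 + c) := by
    unfold LSeriesSummable
    rw [hterm₁]; exact hsumsc
  have hsumf₂ : LSeriesSummable f₂ (s + c) := by
    unfold LSeriesSummable
    rw [hterm₂]
    exact ArithmeticFunction.LSeriesSummable_moebius_iff.mpr hab
  have hLf₁ : LSeries f₁ (1 + c) = riemannZeta (s + c) := by
    rw [← LSeries_one_eq_riemannZeta hsc]
    exact tsum_congr fun n => congrFun hterm₁ n
  have hLf₂ : LSeries f₂ (s + c) = M := tsum_congr fun n => congrFun hterm₂ n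
  -- convolution values on divisors
  have hconv₁ : ∀ n : ℕ, (LSeries.convolution f₁ 1) n = ∑ d ∈ n.divisors, f₁ d := by
    intro n
    rw [LSeries.convolution_def]
    simp only [Pi.one_apply, mul_one]
    exact Nat.sum_divisorsAntidiagonal (fun x _ => f₁ x)
  have hconv₂ : ∀ n : ℕ, (LSeries.convolution f₂ 1) n = ∑ d ∈ n.divisors, f₂ d := by
    intro n
    rw [LSeries.convolution_def]
    simp only [Pi.one_apply, mul_one]
    exact Nat.sum_divisorsAntidiagonal (fun x _ => f₂ x)
  -- LHS computation
  have hinner : ∀ r : ℕ,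
      (∑' l : ℕ, ramanujanSum (l + 1) (r + 1)
          / (((l + 1 : ℕ) : ℂ) ^ s * ((r + 1 : ℕ) : ℂ) ^ (1 + c)))
        = M * (∑ d ∈ (r + 1).divisors, f₁ d) / ((r + 1 : ℕ) : ℂ) ^ (1 + c) := by
    intro r
    have h1 : ∀ l : ℕ, ramanujanSum (l + 1) (r + 1)
          / (((l + 1 : ℕ) : ℂ) ^ s * ((r + 1 : ℕ) : ℂ) ^ (1 + c))
        = (ramanujanSum (l + 1) (r + 1) / ((l + 1 : ℕ) : ℂ) ^ s)
            / ((r + 1 : ℕ) : ℂ) ^ (1 + c) := fun l => by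
      rw [div_div]
    rw [tsum_congr h1, tsum_div_const]
    congr 1
    have h2 : ∑' l : ℕ, ramanujanSum (l + 1) (r + 1) / ((l + 1 : ℕ) : ℂ) ^ s
        = ∑' l : ℕ, ramanujanSum l (r + 1) / (l : ℂ) ^ s := by
      exact tsum_shift (fun l => ramanujanSum l (r + 1) / (l : ℂ) ^ s)
        (by simp [ramanujanSum])
    rw [h2, inner_l_sum s hab (r + 1) (Nat.succ_pos r), ← hM, hf₁]
  have hLHS : (∑' r : ℕ, ∑' l : ℕ,
        ramanujanSum (l + 1) (r + 1) / (((l + 1 : ℕ) : ℂ) ^ s * ((r + 1 : ℕ) : ℂ) ^ (1 + c)))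
      = M * (riemannZeta (s + c) * riemannZeta (1 + c)) := by
    rw [tsum_congr hinner]
    have h3 : ∀ r : ℕ, M * (∑ d ∈ (r + 1).divisors, f₁ d) / ((r + 1 : ℕ) : ℂ) ^ (1 + c)
        = M * LSeries.term (LSeries.convolution f₁ 1) (1 + c) (r + 1) := fun r => by
      rw [LSeries.term_of_ne_zero (Nat.succ_ne_zero r), hconv₁, mul_div_assoc]
    rw [tsum_congr h3, tsum_mul_left]
    congr 1
    rw [tsum_shift (LSeries.term (LSeries.convolution f₁ 1) (1 + c)) (LSeries.term_zero _ _)]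
    have : LSeries (LSeries.convolution f₁ 1) (1 + c)
        = LSeries f₁ (1 + c) * LSeries 1 (1 + c) := LSeries_convolution' hsumf₁ hsum1c
    rw [show (∑' n : ℕ, LSeries.term (LSeries.convolution f₁ 1) (1 + c) n)
        = LSeries (LSeries.convolution f₁ 1) (1 + c) from rfl, this,
      hLf₁, LSeries_one_eq_riemannZeta h1c]
  have hRHS : (∑' l : ℕ, (((l + 1 : ℕ) : ℂ) ^ (s + c))⁻¹ *
          ∑ d ∈ (l + 1).divisors, (d : ℂ) ^ c * ((μ d : ℤ) : ℂ))
      = M * riemannZeta (s + c) := by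
    have h4 : ∀ l : ℕ, (((l + 1 : ℕ) : ℂ) ^ (s + c))⁻¹ *
          (∑ d ∈ (l + 1).divisors, (d : ℂ) ^ c * ((μ d : ℤ) : ℂ))
        = LSeries.term (LSeries.convolution f₂ 1) (s + c) (l + 1) := fun l => by
      rw [LSeries.term_of_ne_zero (Nat.succ_ne_zero l), hconv₂, hf₂, inv_mul_eq_div]
    rw [tsum_congr h4,
      tsum_shift (LSeries.term (LSeries.convolution f₂ 1) (s + c)) (LSeries.term_zero _ _)]
    have : LSeries (LSeries.convolution f₂ 1) (s + c)
        = LSeries f₂ (s + c) * LSeries 1 (s + c) := LSeries_convolution' hsumf₂ hsumsc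
    rw [show (∑' n : ℕ, LSeries.term (LSeries.convolution f₂ 1) (s + c) n)
        = LSeries (LSeries.convolution f₂ 1) (s + c) from rfl, this,
      hLf₂, LSeries_one_eq_riemannZeta hsc]
  calc (∑' r : ℕ, ∑' l : ℕ,
        ramanujanSum (l + 1) (r + 1) / (((l + 1 : ℕ) : ℂ) ^ s * ((r + 1 : ℕ) : ℂ) ^ (1 + c)))
      = M * (riemannZeta (s + c) * riemannZeta (1 + c)) := hLHS
    _ = riemannZeta (1 + c) * (M * riemannZeta (s + c)) := by ring
    _ = riemannZeta (1 + c) *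
        ∑' l : ℕ, (((l + 1 : ℕ) : ℂ) ^ (s + c))⁻¹ *
          ∑ d ∈ (l + 1).divisors, (d : ℂ) ^ c * ((μ d : ℤ) : ℂ) := by rw [hRHS]
end

section
/- For a prime p, a positive integer h_p, and complex a, b, c with Re(b+c) > 0 and Re(a+b+c) > 0, one has Σ_{j=1}^∞ (p^{h_p}, p^j)^a p^{-j(a+b+c)} = p^{-b-c} (1 - p^{-a-b-c} - p^{h_p(-b-c)} + p^{-a} p^{h_p(-b-c)}) / ((1 - p^{-b-c})(1 - p^{-a-b-c})), where (p^{h_p}, p^j) = p^{min(h_p, j)}. -/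
/-- Local sum at p | h: Σ_{j=1}^∞ (p^{h_p},p^j)^a p^{-j(a+b+c)}
= p^{-b-c}(1 - p^{-a-b-c} - p^{h_p(-b-c)} + p^{-a} p^{h_p(-b-c)}) /
((1-p^{-b-c})(1-p^{-a-b-c})). -/
theorem local_sum_dividing (p : ℕ) (hp : p.Prime) (m : ℕ) (hm : 1 ≤ m) (a b c : ℂ)
    (h1 : 0 < (b + c).re) (h2 : 0 < (a + b + c).re) :
    (∑' j : ℕ, ((p : ℂ) ^ (min m (j + 1) : ℕ)) ^ a * (p : ℂ) ^ (-((j : ℂ) + 1) * (a + b + c)))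
      = (p : ℂ) ^ (-b - c) *
          (1 - (p : ℂ) ^ (-a - b - c) - (p : ℂ) ^ ((m : ℂ) * (-b - c)) +
            (p : ℂ) ^ (-a) * (p : ℂ) ^ ((m : ℂ) * (-b - c))) /
        ((1 - (p : ℂ) ^ (-b - c)) * (1 - (p : ℂ) ^ (-a - b - c))) := by
  have hp1 : (1 : ℝ) < p := by exact_mod_cast hp.one_lt
  have hp0 : (0 : ℝ) < p := by linarith
  have hpC : (p : ℂ) ≠ 0 := by exact_mod_cast hp.pos.ne'
  -- norm of p^z for re z < 0
  have hnorm : ∀ z : ℂ, z.re < 0 → ‖(p : ℂ) ^ z‖ < 1 := by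
    intro z hz
    rw [show ((p : ℂ)) = ((p : ℝ) : ℂ) by push_cast; ring,
      Complex.norm_cpow_eq_rpow_re_of_pos hp0]
    exact Real.rpow_lt_one_of_one_lt_of_neg hp1 hz
  set q : ℂ := (p : ℂ) ^ (-(b + c)) with hq
  set r : ℂ := (p : ℂ) ^ (-(a + b + c)) with hr
  have hqn : ‖q‖ < 1 := hnorm _ (by rw [Complex.neg_re]; linarith)
  have hrn : ‖r‖ < 1 := hnorm _ (by rw [Complex.neg_re]; linarith)
  have hq1 : q ≠ 1 := fun h => by simp [h] at hqn
  have hr1 : r ≠ 1 := fun h => by simp [h] at hrn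
  -- powers of q, r
  have hpowq : ∀ k : ℕ, q ^ k = (p : ℂ) ^ ((k : ℂ) * (-(b + c))) := fun k => by
    rw [Complex.cpow_nat_mul]
  have hpowr : ∀ k : ℕ, r ^ k = (p : ℂ) ^ ((k : ℂ) * (-(a + b + c))) := fun k => by
    rw [Complex.cpow_nat_mul]
  -- the summand
  set f : ℕ → ℂ := fun j =>
    ((p : ℂ) ^ (min m (j + 1) : ℕ)) ^ a * (p : ℂ) ^ (-((j : ℂ) + 1) * (a + b + c)) with hf
  have hterm : ∀ j : ℕ, f j = (p : ℂ) ^ (((min m (j + 1) : ℕ) : ℂ) * a) *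
      (p : ℂ) ^ (-((j : ℂ) + 1) * (a + b + c)) := by
    intro j
    simp only [hf]
    congr 1
    rw [← Complex.natCast_cpow_natCast_mul]
  have hcase1 : ∀ j : ℕ, j + 1 ≤ m → f j = q ^ (j + 1) := by
    intro j hj
    rw [hterm j, min_eq_right hj, ← Complex.cpow_add _ _ hpC, hpowq]
    push_cast
    ring_nf
  have hcase2 : ∀ j : ℕ, m ≤ j + 1 → f j = (p : ℂ) ^ ((m : ℂ) * a) * r ^ (j + 1) := by
    intro j hj
    rw [hterm j, min_eq_left hj, hpowr]
    push_cast
    ring_nf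
  -- summability of the shifted sequence
  have hshift : ∀ i : ℕ, f (i + m) = ((p : ℂ) ^ ((m : ℂ) * a) * r ^ (m + 1)) * r ^ i := by
    intro i
    rw [hcase2 (i + m) (by omega), show i + m + 1 = (m + 1) + i by omega, pow_add]
    ring
  have hsr : Summable fun i : ℕ => ((p : ℂ) ^ ((m : ℂ) * a) * r ^ (m + 1)) * r ^ i :=
    (summable_geometric_of_norm_lt_one hrn).mul_left _
  have hsum : Summable f := by
    rw [← summable_nat_add_iff m]
    exact hsr.congr fun i => (hshift i).symm
  have hsplit := Summable.sum_add_tsum_nat_add m hsum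
  have htail : (∑' i : ℕ, f (i + m)) =
      (p : ℂ) ^ ((m : ℂ) * a) * r ^ (m + 1) * (1 - r)⁻¹ := by
    rw [tsum_congr hshift, tsum_mul_left, tsum_geometric_of_norm_lt_one hrn]
  have hhead : (∑ i ∈ Finset.range m, f i) = q * ((q ^ m - 1) / (q - 1)) := by
    have h' : ∀ i ∈ Finset.range m, f i = q * q ^ i := fun i hi => by
      rw [hcase1 i (Finset.mem_range.mp hi)]; ring
    rw [Finset.sum_congr rfl h', ← Finset.mul_sum, geom_sum_eq hq1]
  have htotal : (∑' j : ℕ, f j) =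
      q * ((q ^ m - 1) / (q - 1)) + (p : ℂ) ^ ((m : ℂ) * a) * r ^ (m + 1) * (1 - r)⁻¹ := by
    rw [← hsplit, hhead, htail]
  -- identities to match RHS
  have hqrw : (p : ℂ) ^ (-b - c) = q := by rw [hq]; ring_nf
  have hrrw : (p : ℂ) ^ (-a - b - c) = r := by rw [hr]; ring_nf
  have hQ : (p : ℂ) ^ ((m : ℂ) * (-b - c)) = q ^ m := by
    rw [hpowq]; ring_nf
  have hkey : (p : ℂ) ^ ((m : ℂ) * a) * r ^ m = q ^ m := by
    rw [hpowr, hpowq, ← Complex.cpow_add _ _ hpC]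
    ring_nf
  have hq1' : (1 : ℂ) - q ≠ 0 := by
    intro h; apply hq1; linear_combination -h
  have hr1' : (1 : ℂ) - r ≠ 0 := by
    intro h; apply hr1; linear_combination -h
  have hqm1 : q - 1 ≠ 0 := by intro h; apply hq1; linear_combination h
  -- p^{-a} * q^m = r * q^m / ... better: p^{-a} * q = r
  have haq : (p : ℂ) ^ (-a) * q = r := by
    rw [hq, hr, ← Complex.cpow_add _ _ hpC]; ring_nf
  rw [show (∑' j : ℕ, ((p : ℂ) ^ (min m (j + 1) : ℕ)) ^ a *
      (p : ℂ) ^ (-((j : ℂ) + 1) * (a + b + c))) = ∑' j, f j from rfl, htotal,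
    hqrw, hrrw, hQ]
  have hexp : (p : ℂ) ^ ((m : ℂ) * a) * r ^ (m + 1) = q ^ m * r := by
    rw [pow_succ, ← mul_assoc, hkey]
  rw [hexp]
  have key : (p : ℂ) ^ (-a) * q ^ m * q = r * q ^ m := by
    have h' : (p : ℂ) ^ (-a) * q ^ m * q = ((p : ℂ) ^ (-a) * q) * q ^ m := by ring
    rw [h', haq]
  field_simp
  ring_nf
  linear_combination (1 - q) * key
end

section
/- For a prime p, a positive integer h_p, and complex a, b, c with Re(b+c) > 0 and Re(a+b+c) > 0 and Re(c) > 0, 1 + (1 - p^c) Σ_{j≥1} (p^{h_p}, p^j)^a p^{-j(a+b+c)} = ((1 - p^{-b})(1 - p^{-a-b-c}) + p^{-b}(1 - p^{-a})(1 - p^{-c}) p^{h_p(-b-c)}) / ((1 - p^{-b-c})(1 - p^{-a-b-c})). -/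
/-- Local Euler factor at p^{h_p} || h:
1 + (1-p^c) Σ_{j≥1} (p^{h_p},p^j)^a p^{-j(a+b+c)}
= ((1-p^{-b})(1-p^{-a-b-c}) + p^{-b}(1-p^{-a})(1-p^{-c}) p^{h_p(-b-c)}) /
((1-p^{-b-c})(1-p^{-a-b-c})). -/
theorem local_factor_dividing (p : ℕ) (hp : p.Prime) (m : ℕ) (hm : 1 ≤ m) (a b c : ℂ)
    (h1 : 0 < (b + c).re) (h2 : 0 < (a + b + c).re) (h3 : 0 < c.re) :
    1 + (1 - (p : ℂ) ^ c) *
        ∑' j : ℕ, ((p : ℂ) ^ (min m (j + 1) : ℕ)) ^ a * (p : ℂ) ^ (-((j : ℂ) + 1) * (a + b + c))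
      = ((1 - (p : ℂ) ^ (-b)) * (1 - (p : ℂ) ^ (-a - b - c)) +
          (p : ℂ) ^ (-b) * (1 - (p : ℂ) ^ (-a)) * (1 - (p : ℂ) ^ (-c)) *
            (p : ℂ) ^ ((m : ℂ) * (-b - c))) /
        ((1 - (p : ℂ) ^ (-b - c)) * (1 - (p : ℂ) ^ (-a - b - c))) := by
  have hp1 : (1:ℝ) < (p:ℝ) := by exact_mod_cast hp.one_lt
  have hQ0 : (p : ℂ) ≠ 0 := by
    exact_mod_cast hp.pos.ne'
  have hnorm : ∀ s : ℂ, ‖(p:ℂ) ^ s‖ = (p:ℝ) ^ s.re :=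
    fun s => Complex.norm_natCast_cpow_of_pos hp.pos s
  have hlt : ∀ s : ℂ, s.re < 0 → ‖(p:ℂ) ^ s‖ < 1 := fun s hs => by
    rw [hnorm]
    exact Real.rpow_lt_one_of_one_lt_of_neg hp1 hs
  have hne0 : ∀ s : ℂ, (p:ℂ) ^ s ≠ 0 := fun s => by
    have := Complex.norm_natCast_cpow_pos_of_pos hp.pos s
    intro h; rw [h, norm_zero] at this; exact lt_irrefl _ this
  set r : ℂ := (p:ℂ) ^ (-a - b - c) with hr_def
  set x : ℂ := (p:ℂ) ^ (-b - c) with hx_def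
  have hr_lt : ‖r‖ < 1 := hlt _ (by simp only [Complex.sub_re, Complex.neg_re]
                                    simp only [Complex.add_re] at h2; linarith)
  have hx_lt : ‖x‖ < 1 := hlt _ (by simp only [Complex.sub_re, Complex.neg_re]
                                    simp only [Complex.add_re] at h1; linarith)
  have hr1 : (1 : ℂ) - r ≠ 0 := by
    intro h
    have : r = 1 := by linear_combination -h
    rw [this] at hr_lt; simp at hr_lt
  have hx1 : (1 : ℂ) - x ≠ 0 := by
    intro h
    have : x = 1 := by linear_combination -h
    rw [this] at hx_lt; simp at hx_lt
  -- pow rewriting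
  have hpow : ∀ k : ℕ, ((p:ℂ) ^ k : ℂ) ^ a = ((p:ℂ) ^ a) ^ k := fun k => by
    rw [← Complex.natCast_cpow_natCast_mul, Complex.cpow_nat_mul]
  have hxar : (p:ℂ) ^ a * r = x := by
    rw [hr_def, hx_def, ← Complex.cpow_add _ _ hQ0]
    ring_nf
  -- the summand
  set g : ℕ → ℂ := fun j => ((p:ℂ) ^ a) ^ (min m (j + 1)) * r ^ (j + 1) with hg_def
  have hsummand : ∀ j : ℕ,
      ((p : ℂ) ^ (min m (j + 1) : ℕ)) ^ a * (p : ℂ) ^ (-((j : ℂ) + 1) * (a + b + c)) = g j := by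
    intro j
    rw [hpow, hg_def]
    congr 1
    have h1' : (-((j : ℂ) + 1) * (a + b + c)) = ((j + 1 : ℕ) : ℂ) * (-a - b - c) := by
      push_cast; ring
    rw [h1', Complex.cpow_nat_mul]
  rw [tsum_congr hsummand]
  -- summability
  have hsumm : Summable g := by
    apply Summable.of_norm_bounded
      (g := fun j => (max 1 (‖(p:ℂ) ^ a‖ ^ m) * ‖r‖) * ‖r‖ ^ j)
    · apply Summable.mul_left
      exact summable_geometric_of_lt_one (norm_nonneg r) hr_lt
    · intro j
      rw [hg_def]
      simp only [norm_mul, norm_pow]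
      rw [pow_succ ‖r‖ j]
      have hb : ‖(p:ℂ) ^ a‖ ^ (min m (j+1)) ≤ max 1 (‖(p:ℂ) ^ a‖ ^ m) := by
        rcases le_total ‖(p:ℂ) ^ a‖ 1 with h | h
        · exact le_max_of_le_left (pow_le_one₀ (norm_nonneg _) h)
        · exact le_max_of_le_right (pow_le_pow_right₀ h (min_le_left _ _))
      calc ‖(p:ℂ) ^ a‖ ^ (min m (j+1)) * ‖r‖ ^ (j+1)
          ≤ max 1 (‖(p:ℂ) ^ a‖ ^ m) * ‖r‖ ^ (j+1) := by
            apply mul_le_mul_of_nonneg_right hb (pow_nonneg (norm_nonneg _) _)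
        _ = max 1 (‖(p:ℂ) ^ a‖ ^ m) * ‖r‖ * ‖r‖ ^ j := by rw [pow_succ]; ring
  -- split the sum
  rw [← Summable.sum_add_tsum_nat_add m hsumm]
  -- head
  have hhead : ∑ i ∈ Finset.range m, g i = (x - x * x ^ m) / (1 - x) := by
    have h1' : ∀ i ∈ Finset.range m, g i = x * x ^ i := by
      intro i hi
      rw [Finset.mem_range] at hi
      rw [hg_def]
      simp only
      rw [min_eq_right (by omega : i + 1 ≤ m), ← hxar, mul_pow, pow_succ]
      ring
    have hx1' : x - 1 ≠ 0 := fun h => hx1 (by linear_combination -h)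
    rw [Finset.sum_congr rfl h1', ← Finset.mul_sum, geom_sum_eq
      (fun h => hx1 (by rw [h]; ring)) m]
    field_simp
    ring
  -- tail
  have htail : ∑' j : ℕ, g (j + m) = ((p:ℂ) ^ a) ^ m * (r * r ^ m) * (1 - r)⁻¹ := by
    have h1' : ∀ j : ℕ, g (j + m) = (((p:ℂ) ^ a) ^ m * (r * r ^ m)) * r ^ j := by
      intro j
      rw [hg_def]
      simp only
      rw [min_eq_left (by omega : m ≤ j + m + 1)]
      ring
    rw [tsum_congr h1', tsum_mul_left, tsum_geometric_of_norm_lt_one hr_lt]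
  rw [hhead, htail]
  -- variables
  have hA : (p:ℂ) ^ a = ((p:ℂ) ^ (-a))⁻¹ := by
    rw [← Complex.cpow_neg, neg_neg]
  have hC : (p:ℂ) ^ c = ((p:ℂ) ^ (-c))⁻¹ := by
    rw [← Complex.cpow_neg, neg_neg]
  have hr_eq : r = (p:ℂ) ^ (-a) * ((p:ℂ) ^ (-b) * (p:ℂ) ^ (-c)) := by
    rw [hr_def, ← Complex.cpow_add _ _ hQ0, ← Complex.cpow_add _ _ hQ0]
    ring_nf
  have hx_eq : x = (p:ℂ) ^ (-b) * (p:ℂ) ^ (-c) := by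
    rw [hx_def, ← Complex.cpow_add _ _ hQ0]
    ring_nf
  have hmbc : (p:ℂ) ^ ((m : ℂ) * (-b - c)) = x ^ m := by
    rw [hx_def, Complex.cpow_nat_mul]
  rw [hmbc, hA, hC]
  set A : ℂ := (p:ℂ) ^ (-a) with hA_def
  set B : ℂ := (p:ℂ) ^ (-b) with hB_def
  set C : ℂ := (p:ℂ) ^ (-c) with hC_def
  have hA0 : A ≠ 0 := hne0 _
  have hB0 : B ≠ 0 := hne0 _
  have hC0 : C ≠ 0 := hne0 _
  clear hsummand hhead htail hxar hpow hsumm hlt hnorm hr_lt hx_lt hg_def hr_def hx_def hA_def hB_def hC_def hA hC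
  clear g
  clear_value r x A B C
  subst hr_eq hx_eq
  have key : A⁻¹ ^ m * (A * (B * C) * (A * (B * C)) ^ m) = A * (B * C) * (B * C) ^ m := by
    rw [mul_pow, mul_pow, inv_pow]
    field_simp
  rw [key]
  have hx1' : 1 - C * B ≠ 0 := by rwa [mul_comm]
  have hr1' : 1 - C * B * A ≠ 0 := by intro h; apply hr1; linear_combination h
  field_simp
  ring
end
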